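/- Let G be a group and N a normal subgroup of G with trivial center. Let Aut_N(G) denote the subgroup of Aut(G) consisting of automorphisms f with f(N) = N that induce the identity on G/N, and let Inn_N(G) denote the subgroup of Inn(G) consisting of conjugations by elements of N. Then Inn_N(G) is normal in Aut_N(G), the restriction map carries Inn_N(G) onto Inn(N), and the quotient Aut_N(G)/Inn_N(G) embeds into Out(N). -/

import Mathlib

/-- The subgroup `Inn(G) ≤ Aut(G)` of inner automorphisms. -/
abbrev innAut (G : Type*) [Group G] : Subgroup (MulAut G) :=
  (MulAut.conj : G →* MulAut G).range

instance innAut_normal (G : Type*) [Group G] : (innAut G).Normal := by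
  constructor
  rintro - ⟨g, rfl⟩ f
  refine ⟨f g, ?_⟩
  ext x
  simp [MulAut.conj_apply, map_mul, map_inv, mul_assoc]

/-- The outer automorphism group `Out(G) = Aut(G)/Inn(G)`. -/
abbrev OutAut (G : Type*) [Group G] := MulAut G ⧸ innAut G

/-- `Aut_N(G)`: the subgroup of `Aut(G)` of automorphisms `f` with `f(N) = N` which induce
the identity automorphism on `G/N`, i.e. `f g * g⁻¹ ∈ N` for all `g`. -/
def autRelN {G : Type*} [Group G] (N : Subgroup G) : Subgroup (MulAut G) where
  carrier := {f | (∀ n ∈ N, f n ∈ N) ∧ ∀ g : G, f g * g⁻¹ ∈ N}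
  one_mem' := ⟨fun n hn => by simpa using hn, fun g => by simpa using N.one_mem⟩
  mul_mem' := by
    intro a b ha hb
    refine ⟨fun n hn => ha.1 _ (hb.1 n hn), fun g => ?_⟩
    have h := mul_mem (ha.2 (b g)) (hb.2 g)
    simpa [mul_assoc] using h
  inv_mem' := by
    intro a ha
    constructor
    · intro n hn
      have h2 : n * (a⁻¹ n)⁻¹ ∈ N := by simpa using ha.2 (a⁻¹ n)
      have h3 := mul_mem (inv_mem h2) hn
      simpa [mul_assoc] using h3
    · intro g
      have h := inv_mem (ha.2 (a⁻¹ g))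
      simpa [mul_assoc] using h

/-- `Inn_N(G)`: the subgroup of inner automorphisms of `G` given by conjugation by
elements of `N`. -/
abbrev innRelN {G : Type*} [Group G] (N : Subgroup G) : Subgroup (MulAut G) :=
  N.map (MulAut.conj : G →* MulAut G)

instance innRelN_normal {G : Type*} [Group G] (N : Subgroup G) [N.Normal] :
    ((innRelN N).subgroupOf (autRelN N)).Normal := by
  constructor
  intro c hc f
  rw [Subgroup.mem_subgroupOf] at hc ⊢
  obtain ⟨n, hn, hcn⟩ := hc
  have hfn : (f : MulAut G) n ∈ N := (f.2).1 n hn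
  refine ⟨(f : MulAut G) n, hfn, ?_⟩
  have h : ((f * c * f⁻¹ : ↥(autRelN N)) : MulAut G)
      = (f : MulAut G) * (c : MulAut G) * (f : MulAut G)⁻¹ := rfl
  rw [h, ← hcn]
  ext x
  simp [MulAut.conj_apply, map_mul, map_inv, mul_assoc]

lemma conj_mem_autRelN {G : Type*} [Group G] {N : Subgroup G} [hN : N.Normal] {n : G}
    (hn : n ∈ N) : MulAut.conj n ∈ autRelN N := by
  constructor
  · intro m hm
    simpa [MulAut.conj_apply] using hN.conj_mem m hm n
  · intro g
    have h1 : g * n⁻¹ * g⁻¹ ∈ N := hN.conj_mem _ (inv_mem hn) g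
    have h2 := mul_mem hn h1
    simpa [MulAut.conj_apply, mul_assoc] using h2

/-- Restriction of an automorphism in `Aut_N(G)` to `N`. -/
def resHom {G : Type*} [Group G] (N : Subgroup G) : ↥(autRelN N) →* MulAut ↥N where
  toFun f :=
    { toFun := fun n => ⟨(f : MulAut G) n, f.2.1 n n.2⟩
      invFun := fun n => ⟨((f : MulAut G))⁻¹ n, (f⁻¹).2.1 n n.2⟩
      left_inv := fun n => by ext; simp
      right_inv := fun n => by ext; simp
      map_mul' := fun a b => by ext; simp }
  map_one' := by ext n; rfl
  map_mul' := fun a b => by ext n; rfl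

/-- If `N ⊴ G` has trivial center, then `Inn_N(G)` is normal in `Aut_N(G)`, the restriction
map carries `Inn_N(G)` onto `Inn(N)`, and `Aut_N(G)/Inn_N(G)` embeds into `Out(N)`. -/
theorem autRelN_mod_innRelN_embeds_out (G : Type*) [Group G] (N : Subgroup G) [N.Normal]
    (hZ : Subgroup.center ↥N = ⊥) :
    innRelN N ≤ autRelN N ∧
    ((innRelN N).subgroupOf (autRelN N)).Normal ∧
    ∃ φ : ↥(autRelN N) →* MulAut ↥N,
      (∀ (f : ↥(autRelN N)) (n : ↥N), ((φ f) n : G) = (f : MulAut G) (n : G)) ∧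
      Subgroup.map φ ((innRelN N).subgroupOf (autRelN N)) = innAut ↥N ∧
      ∃ ψ : (↥(autRelN N) ⧸ (innRelN N).subgroupOf (autRelN N)) →* OutAut ↥N,
        (∀ f : ↥(autRelN N),
          ψ (QuotientGroup.mk f) = QuotientGroup.mk (φ f)) ∧
        Function.Injective ψ := by
  have hle : innRelN N ≤ autRelN N := by
    rintro - ⟨n, hn, rfl⟩
    exact conj_mem_autRelN hn
  refine ⟨hle, inferInstance, resHom N, fun f n => rfl, ?_, ?_⟩
  · -- image of Inn_N(G) is Inn(N)
    apply le_antisymm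
    · rintro - ⟨c, hc, rfl⟩
      obtain ⟨n, hn, hcn⟩ := Subgroup.mem_subgroupOf.mp hc
      refine ⟨⟨n, hn⟩, ?_⟩
      ext m
      have : (c : MulAut G) (m : G) = n * m * n⁻¹ := by
        rw [← hcn]; rfl
      simp only [MulAut.conj_apply, Subgroup.coe_mul, InvMemClass.coe_inv]
      exact this.symm
    · rintro - ⟨⟨n, hn⟩, rfl⟩
      refine ⟨⟨MulAut.conj n, conj_mem_autRelN hn⟩, ?_, ?_⟩
      · exact Subgroup.mem_subgroupOf.mpr ⟨n, hn, rfl⟩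
      · ext m
        rfl
  · -- the embedding into Out(N)
    have hker : ∀ c ∈ (innRelN N).subgroupOf (autRelN N),
        (QuotientGroup.mk' (innAut ↥N)).comp (resHom N) c = 1 := by
      intro c hc
      obtain ⟨n, hn, hcn⟩ := Subgroup.mem_subgroupOf.mp hc
      simp only [MonoidHom.comp_apply, QuotientGroup.mk'_apply,
        QuotientGroup.eq_one_iff]
      refine ⟨⟨n, hn⟩, ?_⟩
      ext m
      have : (c : MulAut G) (m : G) = n * m * n⁻¹ := by rw [← hcn]; rfl
      simp only [MulAut.conj_apply, Subgroup.coe_mul, InvMemClass.coe_inv]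
      exact this.symm
    refine ⟨QuotientGroup.lift _ _ hker, fun f => rfl, ?_⟩
    rw [← MonoidHom.ker_eq_bot_iff]
    rw [eq_bot_iff]
    intro x hx
    induction x using QuotientGroup.induction_on with
    | H f =>
      simp only [MonoidHom.mem_ker, QuotientGroup.lift_mk'] at hx
      have hx' : resHom N f ∈ innAut ↥N := by
        have := hx
        change ((QuotientGroup.mk' (innAut ↥N)).comp (resHom N)) f = 1 at this
        rwa [MonoidHom.comp_apply, QuotientGroup.mk'_apply,
          QuotientGroup.eq_one_iff] at this
      obtain ⟨m, hm⟩ := hx'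
      -- h := conj m⁻¹ * f fixes N pointwise and we show h = 1
      set cm : ↥(autRelN N) := ⟨MulAut.conj (m : G), conj_mem_autRelN m.2⟩ with hcm
      set h : ↥(autRelN N) := cm⁻¹ * f with hh
      have hfixN : ∀ ν ∈ N, (h : MulAut G) ν = ν := by
        intro ν hν
        have : ((resHom N f ⟨ν, hν⟩ : ↥N) : G) = (m : G) * ν * (m : G)⁻¹ := by
          rw [← hm]; rfl
        have hf : (f : MulAut G) ν = (m : G) * ν * (m : G)⁻¹ := this
        show ((MulAut.conj (m : G))⁻¹ * (f : MulAut G)) ν = ν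
        simp only [MulAut.mul_apply]
        rw [hf]
        show (MulAut.conj (m : G))⁻¹ ((m : G) * ν * (m : G)⁻¹) = ν
        simp only [MulAut.conj_inv_apply]
        group
      have hone : h = 1 := by
        have hgen : ∀ g : G, (h : MulAut G) g = g := by
          intro g
          have hz : (h : MulAut G) g * g⁻¹ ∈ N := h.2.2 g
          set z : G := (h : MulAut G) g * g⁻¹ with hzdef
          have hzc : ∀ ν ∈ N, z * (g * ν * g⁻¹) = (g * ν * g⁻¹) * z := by
            intro ν hν
            have hmemc : g * ν * g⁻¹ ∈ N := ‹N.Normal›.conj_mem ν hν g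
            have e1 : (h : MulAut G) (g * ν * g⁻¹) = g * ν * g⁻¹ := hfixN _ hmemc
            have e2 : (h : MulAut G) (g * ν * g⁻¹)
                = (z * g) * ν * (z * g)⁻¹ := by
              have hg : (h : MulAut G) g = z * g := by
                rw [hzdef]; group
              rw [map_mul, map_mul, hfixN ν hν, hg, map_inv, hg]
            have key := e1.symm.trans e2
            conv_rhs => rw [key]
            group
          have hzcen : (⟨z, hz⟩ : ↥N) ∈ Subgroup.center ↥N := by
            rw [Subgroup.mem_center_iff]
            intro b
            have hb : (b : G) = g * (g⁻¹ * b * g) * g⁻¹ := by group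
            have hbm : g⁻¹ * (b : G) * g ∈ N := by
              have := ‹N.Normal›.conj_mem (b : G) b.2 g⁻¹
              simpa using this
            have hcomm := hzc _ hbm
            apply Subtype.ext
            show (b : G) * z = z * (b : G)
            conv_lhs => rw [hb]
            conv_rhs => rw [hb]
            exact hcomm.symm
          rw [hZ, Subgroup.mem_bot] at hzcen
          have hz1 : z = 1 := congrArg Subtype.val hzcen
          have : (h : MulAut G) g = z * g := by rw [hzdef]; group
          rw [this, hz1, one_mul]
        apply Subtype.ext
        ext g
        exact hgen g
      have hf : f = cm := by
        have := hone
        rw [hh] at this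
        group at this
        calc f = cm * (cm⁻¹ * f) := by group
        _ = cm * 1 := by rw [← hh, hone]
        _ = cm := mul_one cm
      have hmem : f ∈ (innRelN N).subgroupOf (autRelN N) :=
        Subgroup.mem_subgroupOf.mpr (by rw [hf]; exact ⟨(m : G), m.2, rfl⟩)
      rw [Subgroup.mem_bot]
      exact (QuotientGroup.eq_one_iff f).mpr hmem
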